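/- Let A be a complex Banach *-algebra with identity and a ∈ A with generalized core-EP inverse a^⊕. Set p = a a^⊕. Then p is a projection, p a a^⊕ = a a^⊕, (1-p) a p = 0, p a p is invertible in the corner algebra p A p (with unit p), and (1-p) a (1-p) is quasinilpotent. -/
import Mathlib

open Filter Topology

variable {A : Type*} [NormedRing A] [StarRing A] [NormedAlgebra ℂ A] [StarModule ℂ A]
  [CompleteSpace A]

/-- quasinilpotent: `lim ‖z^n‖^(1/n) = 0` -/
def IsQNil (z : A) : Prop :=
  Tendsto (fun n : ℕ => ‖z ^ n‖ ^ ((1 : ℝ) / n)) atTop (𝓝 0)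

/-- generalized Drazin inverse -/
def IsGD (a x : A) : Prop :=
  a * x ^ 2 = x ∧ a * x = x * a ∧ IsQNil (a - a ^ 2 * x)

/-- generalized core-EP inverse -/
def IsGCEP (a x : A) : Prop :=
  x = a * x ^ 2 ∧ star (a * x) = a * x ∧
    Tendsto (fun n : ℕ => ‖a ^ n - x * a ^ (n + 1)‖ ^ ((1 : ℝ) / n)) atTop (𝓝 0)

lemma vanish (v : A) (e : ℕ → A) (C M : ℝ) (hC : 0 ≤ C) (hM : 0 ≤ M)
    (he : Tendsto (fun n : ℕ => ‖e n‖ ^ ((1 : ℝ) / n)) atTop (𝓝 0))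
    (hv : ∀ᶠ n in atTop, ‖v‖ ≤ C * ‖e n‖ * M ^ n) : v = 0 := by
  set ε : ℝ := 1 / (2 * (M + 1)) with hεdef
  have hε : 0 < ε := by positivity
  have hεM : ε * M < 1 := by
    rw [hεdef, div_mul_eq_mul_div, one_mul, div_lt_one (by positivity)]
    linarith
  have hεM0 : 0 ≤ ε * M := by positivity
  have hgeo : Tendsto (fun n : ℕ => C * (ε * M) ^ n) atTop (𝓝 0) := by
    simpa using (tendsto_pow_atTop_nhds_zero_of_lt_one hεM0 hεM).const_mul C
  have hub : ∀ᶠ n in atTop, ‖v‖ ≤ C * (ε * M) ^ n := by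
    filter_upwards [hv, he.eventually (gt_mem_nhds hε), eventually_ge_atTop 1]
      with n h1 h2 h3
    have hn : (n : ℝ) ≠ 0 := Nat.cast_ne_zero.mpr (by omega)
    have he' : ‖e n‖ ≤ ε ^ n := by
      have h0 : ‖e n‖ = (‖e n‖ ^ ((1 : ℝ) / n)) ^ n := by
        rw [← Real.rpow_natCast (‖e n‖ ^ ((1 : ℝ) / n)) n,
          ← Real.rpow_mul (norm_nonneg _), one_div, inv_mul_cancel₀ hn, Real.rpow_one]
      rw [h0]
      exact pow_le_pow_left₀ (Real.rpow_nonneg (norm_nonneg _) _) h2.le n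
    calc ‖v‖ ≤ C * ‖e n‖ * M ^ n := h1
      _ ≤ C * ε ^ n * M ^ n := by gcongr
      _ = C * (ε * M) ^ n := by rw [mul_pow]; ring
  have : ‖v‖ ≤ 0 := ge_of_tendsto hgeo hub
  exact norm_le_zero_iff.mp this

theorem stmt10 (a x : A) (h : IsGCEP a x) :
    (a * x) * (a * x) = a * x ∧ star (a * x) = a * x ∧
      (a * x) * (a * x) = a * x ∧
      (1 - a * x) * a * (a * x) = 0 ∧
      (∃ w : A, (a * x) * w * (a * x) = w ∧
        ((a * x) * a * (a * x)) * w = a * x ∧ w * ((a * x) * a * (a * x)) = a * x) ∧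
      IsQNil ((1 - a * x) * a * (1 - a * x)) := by
  obtain ⟨h1, h2, h3⟩ := h
  set e : ℕ → A := fun n => a ^ n - x * a ^ (n + 1) with he_def
  set M : ℝ := max ‖x‖ 1 with hM_def
  have hM1 : 1 ≤ M := le_max_right _ _
  have hM0 : 0 ≤ M := le_trans zero_le_one hM1
  have hxM : ‖x‖ ≤ M := le_max_left _ _
  -- F0 : x = a^n * x^(n+1)
  have F0 : ∀ n : ℕ, x = a ^ n * x ^ (n + 1) := by
    intro n
    induction n with
    | zero => simp
    | succ n ih =>
      have key : a ^ (n + 1) * x ^ (n + 2) = a ^ n * (a * x ^ 2) * x ^ n := by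
        rw [pow_succ a n, show n + 2 = 2 + n from by omega, pow_add]
        generalize a ^ n = b
        generalize x ^ n = y
        noncomm_ring
      rw [key, ← h1, mul_assoc, ← pow_succ']
      exact ih
  have hpx : a * x * x = x := by
    rw [mul_assoc, ← pow_two]
    exact h1.symm
  have h0 : (1 - a * x) * x = 0 := by
    have : (1 - a * x) * x = x - a * x * x := by noncomm_ring
    rw [this, hpx, sub_self]
  -- F1 : x * a * x = x
  have F1 : x * a * x = x := by
    have idn : ∀ n : ℕ, x * a * x - x = -(e n * x ^ (n + 1)) := by
      intro n
      have step : e n * x ^ (n + 1) = a ^ n * x ^ (n + 1) - x * a * (a ^ n * x ^ (n + 1)) := by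
        show (a ^ n - x * a ^ (n + 1)) * x ^ (n + 1) = _
        rw [pow_succ' a n]
        generalize a ^ n = b
        generalize x ^ (n + 1) = y
        noncomm_ring
      rw [step, ← F0 n]
      abel
    have hz : x * a * x - x = 0 := by
      apply vanish _ e M M hM0 hM0 h3
      apply Eventually.of_forall
      intro n
      rw [idn n, norm_neg]
      calc ‖e n * x ^ (n + 1)‖ ≤ ‖e n‖ * ‖x‖ ^ (n + 1) :=
            le_trans (norm_mul_le _ _) (by gcongr; exact norm_pow_le' x (by omega))
        _ ≤ ‖e n‖ * M ^ (n + 1) := by gcongr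
        _ = M * ‖e n‖ * M ^ n := by rw [pow_succ]; ring
    exact sub_eq_zero.mp hz
  -- F2 : x * (a * (a * x)) = a * x
  have F2 : x * (a * (a * x)) = a * x := by
    have idn : ∀ n : ℕ, x * (a * (a * x)) - a * x = -(e (1 + n) * x ^ (n + 1)) := by
      intro n
      have step : e (1 + n) * x ^ (n + 1) =
          a * (a ^ n * x ^ (n + 1)) - x * (a * (a * (a ^ n * x ^ (n + 1)))) := by
        show (a ^ (1 + n) - x * a ^ (1 + n + 1)) * x ^ (n + 1) = _
        rw [show 1 + n + 1 = 2 + n from by omega, pow_add, pow_add, pow_one, pow_two]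
        generalize a ^ n = b
        generalize x ^ (n + 1) = y
        noncomm_ring
      rw [step, ← F0 n]
      abel
    have hz : x * (a * (a * x)) - a * x = 0 := by
      apply vanish _ e 1 M zero_le_one hM0 h3
      filter_upwards [eventually_ge_atTop 1] with m hm
      obtain ⟨n, rfl⟩ := Nat.exists_eq_add_of_le hm
      rw [idn n, norm_neg]
      calc ‖e (1 + n) * x ^ (n + 1)‖ ≤ ‖e (1 + n)‖ * ‖x‖ ^ (n + 1) :=
            le_trans (norm_mul_le _ _) (by gcongr; exact norm_pow_le' x (by omega))
        _ ≤ ‖e (1 + n)‖ * M ^ (n + 1) := by gcongr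
        _ = 1 * ‖e (1 + n)‖ * M ^ (1 + n) := by rw [show 1 + n = n + 1 from by omega]; ring
    exact sub_eq_zero.mp hz
  -- F3 : (1 - a*x) * a * (a*x) = 0
  have F3 : (1 - a * x) * a * (a * x) = 0 := by
    have idn : ∀ n : ℕ, (1 - a * x) * a * (a * x) =
        (1 - a * x) * e (2 + n) * x ^ (n + 1) := by
      intro n
      have step : (1 - a * x) * e (2 + n) * x ^ (n + 1) =
          (1 - a * x) * a * (a * (a ^ n * x ^ (n + 1)))
            - ((1 - a * x) * x) * (a ^ (2 + n + 1) * x ^ (n + 1)) := by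
        show (1 - a * x) * (a ^ (2 + n) - x * a ^ (2 + n + 1)) * x ^ (n + 1) = _
        rw [show 2 + n = 1 + (1 + n) from by omega, pow_add, pow_add, pow_one]
        generalize a ^ n = b
        generalize a ^ (1 + (1 + n) + 1) = c
        generalize x ^ (n + 1) = y
        noncomm_ring
      rw [step, h0, zero_mul, sub_zero, ← F0 n]
    apply vanish _ e ‖1 - a * x‖ M (norm_nonneg _) hM0 h3
    filter_upwards [eventually_ge_atTop 2] with m hm
    obtain ⟨n, rfl⟩ := Nat.exists_eq_add_of_le hm
    rw [idn n]
    calc ‖(1 - a * x) * e (2 + n) * x ^ (n + 1)‖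
        ≤ ‖1 - a * x‖ * ‖e (2 + n)‖ * ‖x‖ ^ (n + 1) := by
          refine le_trans (norm_mul_le _ _) ?_
          gcongr
          · exact le_trans (norm_mul_le _ _) le_rfl
          · exact norm_pow_le' x (by omega)
      _ ≤ ‖1 - a * x‖ * ‖e (2 + n)‖ * M ^ (2 + n) := by
          have hMn : ‖x‖ ^ (n + 1) ≤ M ^ (2 + n) :=
            le_trans (pow_le_pow_left₀ (norm_nonneg _) hxM _)
              (pow_le_pow_right₀ hM1 (by omega))
          exact mul_le_mul_of_nonneg_left hMn (by positivity)
  have G1 : a * x * (a * x) = a * x := by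
    have hh : a * x * (a * x) = a * (x * a * x) := by noncomm_ring
    rw [hh, F1]
  refine ⟨G1, h2, G1, F3, ⟨x, ?_, ?_, ?_⟩, ?_⟩
  · rw [hpx, ← mul_assoc]
    exact F1
  · have hh : a * x * a * (a * x) * x = a * x * a * (a * x * x) := by noncomm_ring
    rw [hh, hpx, mul_assoc (a * x) a x]
    exact G1
  · have hh : x * (a * x * a * (a * x)) = x * a * x * (a * (a * x)) := by noncomm_ring
    rw [hh, F1]
    exact F2
  · have hpq : (1 - a * x) * a * (1 - a * x) = (1 - a * x) * a := by
      have hh : (1 - a * x) * a * (1 - a * x) =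
          (1 - a * x) * a - (1 - a * x) * a * (a * x) := by noncomm_ring
      rw [hh, F3, sub_zero]
    have hpow : ∀ n : ℕ,
        ((1 - a * x) * a * (1 - a * x)) ^ (n + 1) = (1 - a * x) * a ^ (n + 1) := by
      intro n
      induction n with
      | zero => simpa using hpq
      | succ n ih =>
        rw [pow_succ', ih]
        have hh : (1 - a * x) * a * (1 - a * x) * ((1 - a * x) * a ^ (n + 1)) =
            ((1 - a * x) * a * (1 - a * x)) * (1 - a * x) * a ^ (n + 1) := by noncomm_ring
        rw [hh, hpq]
        have hh2 : (1 - a * x) * a * (1 - a * x) * a ^ (n + 1) =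
            ((1 - a * x) * a * (1 - a * x)) * a ^ (n + 1) := by noncomm_ring
        rw [hh2, hpq, mul_assoc, ← pow_succ']
    have hbe : ∀ n : ℕ, (1 - a * x) * a ^ (n + 1) = (1 - a * x) * e (n + 1) := by
      intro n
      have step : (1 - a * x) * e (n + 1) =
          (1 - a * x) * a ^ (n + 1) - ((1 - a * x) * x) * a ^ (n + 1 + 1) := by
        show (1 - a * x) * (a ^ (n + 1) - x * a ^ (n + 1 + 1)) = _
        generalize a ^ (n + 1) = b
        generalize a ^ (n + 1 + 1) = c
        noncomm_ring
      rw [step, h0, zero_mul, sub_zero]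
    show Tendsto
      (fun n : ℕ => ‖((1 - a * x) * a * (1 - a * x)) ^ n‖ ^ ((1 : ℝ) / n)) atTop (𝓝 0)
    set C : ℝ := ‖1 - a * x‖ + 1 with hC_def
    have hC : 0 < C := by positivity
    have hg : Tendsto (fun n : ℕ => C ^ ((1 : ℝ) / n) * ‖e n‖ ^ ((1 : ℝ) / n))
        atTop (𝓝 0) := by
      have h1' : Tendsto (fun n : ℕ => C ^ ((1 : ℝ) / n)) atTop (𝓝 1) := by
        have := (tendsto_const_nhds (x := C) (f := atTop (α := ℕ))).rpow
          (tendsto_one_div_atTop_nhds_zero_nat) (Or.inl (ne_of_gt hC))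
        simpa using this
      simpa using h1'.mul h3
    apply squeeze_zero' (Eventually.of_forall fun n => Real.rpow_nonneg (norm_nonneg _) _)
      ?_ hg
    filter_upwards [eventually_ge_atTop 1] with m hm
    obtain ⟨n, rfl⟩ := Nat.exists_eq_add_of_le hm
    have hb : ((1 - a * x) * a * (1 - a * x)) ^ (1 + n) = (1 - a * x) * e (1 + n) := by
      rw [show 1 + n = n + 1 from by omega, hpow, hbe]
    rw [hb]
    have hle : ‖(1 - a * x) * e (1 + n)‖ ≤ C * ‖e (1 + n)‖ :=
      le_trans (norm_mul_le _ _)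
        (mul_le_mul_of_nonneg_right (by rw [hC_def]; linarith) (norm_nonneg _))
    calc ‖(1 - a * x) * e (1 + n)‖ ^ ((1 : ℝ) / (1 + n : ℕ))
        ≤ (C * ‖e (1 + n)‖) ^ ((1 : ℝ) / (1 + n : ℕ)) :=
          Real.rpow_le_rpow (norm_nonneg _) hle (by positivity)
      _ = C ^ ((1 : ℝ) / (1 + n : ℕ)) * ‖e (1 + n)‖ ^ ((1 : ℝ) / (1 + n : ℕ)) :=
          Real.mul_rpow hC.le (norm_nonneg _)
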